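/- Let p be a finitely supported joint distribution on U × V × X (finite sets) such that the maximum of F(p) := I(U;Y₁) + I(V;Y₂) - I(U;V) over all couplings (U,V,X) → (Y₁,Y₂) through fixed channels is attained at p, and suppose X is a deterministic function of (U,V) under p. If |U| > |X|, then there exists a distribution q with strictly smaller support of U (|supp(U)| ≤ |U| - 1), with X still a deterministic function of (U,V) and the same marginal distribution of X, such that F(q) = F(p). -/

import Mathlib

open scoped BigOperators

/-- Mutual information (base-2) of two finitely-valued random variables given
their joint probability mass function. -/
noncomputable def mutInf {A B : Type*} [Fintype A] [Fintype B] (p : A → B → ℝ) : ℝ :=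
  ∑ a, ∑ b, p a b * Real.logb 2 (p a b / ((∑ b', p a b') * (∑ a', p a' b)))

/-- `F p = I(U;Y₁) + I(V;Y₂) - I(U;V)` for the joint distribution `p` on `U × V × X`
passed through fixed channels `W1 : X → Y₁` and `W2 : X → Y₂`. -/
noncomputable def FMarton {U V X Y1 Y2 : Type*}
    [Fintype U] [Fintype V] [Fintype X] [Fintype Y1] [Fintype Y2]
    (W1 : X → Y1 → ℝ) (W2 : X → Y2 → ℝ) (p : U → V → X → ℝ) : ℝ :=
  mutInf (fun u y1 => ∑ v, ∑ x, p u v x * W1 x y1)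
    + mutInf (fun v y2 => ∑ u, ∑ x, p u v x * W2 x y2)
    - mutInf (fun u v => ∑ x, p u v x)

/-! ### Auxiliary material for the proof -/

set_option linter.unusedSectionVars false

noncomputable def phiAux (t : ℝ) : ℝ := t * Real.logb 2 t

lemma phiAux_mid {a b : ℝ} (ha : 0 ≤ a) (hb : 0 ≤ b) :
    phiAux ((a + b) / 2) ≤ (phiAux a + phiAux b) / 2 := by
  have h := Real.convexOn_mul_log.2 (Set.mem_Ici.mpr ha) (Set.mem_Ici.mpr hb)
    (by norm_num : (0:ℝ) ≤ 1/2) (by norm_num : (0:ℝ) ≤ 1/2) (by norm_num)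
  simp only [smul_eq_mul] at h
  have hlog2 : (0:ℝ) < Real.log 2 := Real.log_pos (by norm_num)
  have e1 : (1/2 : ℝ) * a + (1/2) * b = (a + b)/2 := by ring
  rw [e1] at h
  unfold phiAux
  rw [Real.logb, Real.logb, Real.logb]
  have h2 := mul_le_mul_of_nonneg_right h (inv_nonneg.mpr hlog2.le)
  calc (a + b) / 2 * (Real.log ((a + b) / 2) / Real.log 2)
      = ((a + b)/2 * Real.log ((a+b)/2)) * (Real.log 2)⁻¹ := by ring
    _ ≤ (1/2 * (a * Real.log a) + 1/2 * (b * Real.log b)) * (Real.log 2)⁻¹ := h2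
    _ = (a * (Real.log a / Real.log 2) + b * (Real.log b / Real.log 2)) / 2 := by ring

lemma rearr3 {U V X : Type*} [Fintype U] [Fintype V] [Fintype X]
    (g : U → V → X → ℝ) (h : U → X → ℝ) :
    ∑ u, ∑ v, ∑ x, g u v x * h u x = ∑ x, ∑ u, (∑ v, g u v x) * h u x := by
  have : ∀ u : U, ∑ v, ∑ x, g u v x * h u x = ∑ x, (∑ v, g u v x) * h u x := by
    intro u
    rw [Finset.sum_comm]
    exact Finset.sum_congr rfl fun x _ => (Finset.sum_mul _ _ _).symm
  simp_rw [this]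
  exact Finset.sum_comm

lemma sum_over_out {V X Y1 : Type*} [Fintype V] [Fintype X] [Fintype Y1]
    (a : V → X → ℝ) (W : X → Y1 → ℝ) (hW : ∀ x, ∑ y, W x y = 1) :
    ∑ y, ∑ v, ∑ x, a v x * W x y = ∑ v, ∑ x, a v x := by
  rw [Finset.sum_comm]
  refine Finset.sum_congr rfl fun v _ => ?_
  rw [Finset.sum_comm]
  refine Finset.sum_congr rfl fun x _ => ?_
  rw [← Finset.mul_sum, hW, mul_one]

section Terms
variable {U V X Y1 Y2 : Type*} [Fintype U] [Fintype V] [Fintype X] [Fintype Y1] [Fintype Y2]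

lemma pull_const (a : V → X → ℝ) (c : ℝ) (W : X → Y1 → ℝ) (y : Y1) :
    ∑ v, ∑ x, (a v x * c) * W x y = c * ∑ v, ∑ x, a v x * W x y := by
  rw [Finset.mul_sum]
  refine Finset.sum_congr rfl fun v _ => ?_
  rw [Finset.mul_sum]
  exact Finset.sum_congr rfl fun x _ => by ring

lemma col_const (W : X → Y1 → ℝ) (p : U → V → X → ℝ) (L : U → ℝ)
    (hL : ∀ x, ∑ u, (∑ v, p u v x) * L u = 0) (y : Y1) :
    ∑ u, L u * (∑ v, ∑ x, p u v x * W x y) = 0 := by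
  have h1 : ∀ u : U, L u * (∑ v, ∑ x, p u v x * W x y)
      = ∑ v, ∑ x, p u v x * (L u * W x y) := by
    intro u
    rw [Finset.mul_sum]
    refine Finset.sum_congr rfl fun v _ => ?_
    rw [Finset.mul_sum]
    exact Finset.sum_congr rfl fun x _ => by ring
  simp_rw [h1]
  have h2 := rearr3 (U := U) (V := V) (X := X) p (fun u x => L u * W x y)
  rw [show (∑ u, ∑ v, ∑ x, p u v x * (L u * W x y))
      = ∑ u, ∑ v, ∑ x, p u v x * ((fun u x => L u * W x y) u x) from rfl, h2]
  refine Finset.sum_eq_zero fun x _ => ?_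
  have h3 : ∑ u, (∑ v, p u v x) * (L u * W x y) = (∑ u, (∑ v, p u v x) * L u) * W x y := by
    rw [Finset.sum_mul]
    exact Finset.sum_congr rfl fun u _ => by ring
  rw [h3, hL, zero_mul]

lemma term1Aux (W1 : X → Y1 → ℝ) (hW1sum : ∀ x, ∑ y, W1 x y = 1)
    (p : U → V → X → ℝ) (L : U → ℝ)
    (hL : ∀ x, ∑ u, (∑ v, p u v x) * L u = 0)
    (ε : ℝ) (hε : ∀ u, 0 ≤ 1 + ε * L u) :
    mutInf (fun u y1 => ∑ v, ∑ x, (p u v x * (1 + ε * L u)) * W1 x y1) =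
      ∑ u, (1 + ε * L u) * ∑ y1, (∑ v, ∑ x, p u v x * W1 x y1) *
        Real.logb 2 ((∑ v, ∑ x, p u v x * W1 x y1) /
          ((∑ v, ∑ x, p u v x) * (∑ u', ∑ v, ∑ x, p u' v x * W1 x y1))) := by
  unfold mutInf
  beta_reduce
  have hA : ∀ (u : U) (y : Y1), (∑ v, ∑ x, (p u v x * (1 + ε * L u)) * W1 x y)
      = (1 + ε * L u) * ∑ v, ∑ x, p u v x * W1 x y := fun u => pull_const (p u) _ _
  have hrow : ∀ u : U, (∑ y, ∑ v, ∑ x, (p u v x * (1 + ε * L u)) * W1 x y)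
      = (1 + ε * L u) * ∑ v, ∑ x, p u v x := by
    intro u
    simp_rw [hA u, ← Finset.mul_sum]
    rw [sum_over_out _ _ hW1sum]
  have hcol : ∀ y : Y1, (∑ u, ∑ v, ∑ x, (p u v x * (1 + ε * L u)) * W1 x y)
      = ∑ u', ∑ v, ∑ x, p u' v x * W1 x y := by
    intro y
    simp_rw [hA]
    have : ∀ u : U, (1 + ε * L u) * (∑ v, ∑ x, p u v x * W1 x y)
        = (∑ v, ∑ x, p u v x * W1 x y) + ε * (L u * (∑ v, ∑ x, p u v x * W1 x y)) := by
      intro u; ring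
    simp_rw [this]
    rw [Finset.sum_add_distrib, ← Finset.mul_sum, col_const W1 p L hL y, mul_zero, add_zero]
  refine Finset.sum_congr rfl fun u _ => ?_
  rw [Finset.mul_sum]
  refine Finset.sum_congr rfl fun y _ => ?_
  rw [hA, hrow, hcol]
  rcases (hε u).eq_or_lt with h | h
  · rw [← h]; ring_nf
  · have hne : (1 + ε * L u) ≠ 0 := ne_of_gt h
    have : ((1 + ε * L u) * ∑ v, ∑ x, p u v x * W1 x y) /
        (((1 + ε * L u) * ∑ v, ∑ x, p u v x) * ∑ u', ∑ v, ∑ x, p u' v x * W1 x y)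
        = (∑ v, ∑ x, p u v x * W1 x y) /
          ((∑ v, ∑ x, p u v x) * ∑ u', ∑ v, ∑ x, p u' v x * W1 x y) := by
      rw [mul_assoc, mul_div_mul_left _ _ hne]
    rw [this]; ring

lemma term3Aux (p : U → V → X → ℝ) (hpnn : ∀ u v x, 0 ≤ p u v x)
    (L : U → ℝ) (ε : ℝ) (hε : ∀ u, 0 ≤ 1 + ε * L u) :
    mutInf (fun u v => ∑ x, p u v x * (1 + ε * L u)) =
      (∑ u, (1 + ε * L u) * ∑ v, (∑ x, p u v x) *
        Real.logb 2 ((∑ x, p u v x) / (∑ v', ∑ x, p u v' x)))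
      - ∑ v, phiAux (∑ u, (1 + ε * L u) * (∑ x, p u v x)) := by
  unfold mutInf
  beta_reduce
  have hA : ∀ (u : U) (v : V), (∑ x, p u v x * (1 + ε * L u))
      = (1 + ε * L u) * ∑ x, p u v x := by
    intro u v
    rw [Finset.mul_sum]
    exact Finset.sum_congr rfl fun x _ => by ring
  have hrow : ∀ u : U, (∑ v, ∑ x, p u v x * (1 + ε * L u))
      = (1 + ε * L u) * ∑ v, ∑ x, p u v x := by
    intro u
    simp_rw [hA, ← Finset.mul_sum]
  have hcol : ∀ v : V, (∑ u, ∑ x, p u v x * (1 + ε * L u))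
      = ∑ u, (1 + ε * L u) * (∑ x, p u v x) := by
    intro v; exact Finset.sum_congr rfl fun u _ => hA u v
  have hrnn : ∀ (u : U) (v : V), 0 ≤ ∑ x, p u v x :=
    fun u v => Finset.sum_nonneg fun x _ => hpnn u v x
  have key : ∀ (u : U) (v : V),
      (∑ x, p u v x * (1 + ε * L u)) * Real.logb 2 ((∑ x, p u v x * (1 + ε * L u)) /
        ((∑ v', ∑ x, p u v' x * (1 + ε * L u)) * (∑ u', ∑ x, p u' v x * (1 + ε * L u'))))
      = (1 + ε * L u) * ((∑ x, p u v x) *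
          Real.logb 2 ((∑ x, p u v x) / (∑ v', ∑ x, p u v' x)))
        - (1 + ε * L u) * (∑ x, p u v x) *
          Real.logb 2 (∑ u', (1 + ε * L u') * (∑ x, p u' v x)) := by
    intro u v
    rw [hA, hrow, hcol]
    rcases (hε u).eq_or_lt with h | h
    · rw [← h]; ring
    · have hne : (1 + ε * L u) ≠ 0 := ne_of_gt h
      rcases (hrnn u v).eq_or_lt with hr | hr
      · rw [← hr]; ring
      · have hrne : (∑ x, p u v x) ≠ 0 := ne_of_gt hr
        have hpU : 0 < ∑ v', ∑ x, p u v' x :=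
          lt_of_lt_of_le hr (Finset.single_le_sum (fun v' _ => hrnn u v') (Finset.mem_univ v))
        have hs : 0 < ∑ u', (1 + ε * L u') * (∑ x, p u' v x) := by
          refine lt_of_lt_of_le (mul_pos h hr) (Finset.single_le_sum
            (fun u' _ => mul_nonneg (hε u') (hrnn u' v)) (Finset.mem_univ u))
        have hratio : ((1 + ε * L u) * ∑ x, p u v x) /
            (((1 + ε * L u) * ∑ v', ∑ x, p u v' x) * ∑ u', (1 + ε * L u') * ∑ x, p u' v x)
            = (∑ x, p u v x) / (∑ v', ∑ x, p u v' x) / (∑ u', (1 + ε * L u') * ∑ x, p u' v x) := by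
          rw [mul_assoc, mul_div_mul_left _ _ hne, div_div]
        rw [hratio, Real.logb_div (div_ne_zero hrne (ne_of_gt hpU)) (ne_of_gt hs)]
        ring
  calc ∑ u, ∑ v, (∑ x, p u v x * (1 + ε * L u)) * Real.logb 2 ((∑ x, p u v x * (1 + ε * L u)) /
        ((∑ v', ∑ x, p u v' x * (1 + ε * L u)) * (∑ u', ∑ x, p u' v x * (1 + ε * L u'))))
      = ∑ u, ∑ v, ((1 + ε * L u) * ((∑ x, p u v x) *
          Real.logb 2 ((∑ x, p u v x) / (∑ v', ∑ x, p u v' x)))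
        - (1 + ε * L u) * (∑ x, p u v x) *
          Real.logb 2 (∑ u', (1 + ε * L u') * (∑ x, p u' v x))) := by
        exact Finset.sum_congr rfl fun u _ => Finset.sum_congr rfl fun v _ => key u v
    _ = (∑ u, (1 + ε * L u) * ∑ v, (∑ x, p u v x) *
          Real.logb 2 ((∑ x, p u v x) / (∑ v', ∑ x, p u v' x)))
        - ∑ v, phiAux (∑ u, (1 + ε * L u) * (∑ x, p u v x)) := by
        simp_rw [Finset.sum_sub_distrib]
        congr 1
        · exact Finset.sum_congr rfl fun u _ => (Finset.mul_sum _ _ _).symm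
        · rw [Finset.sum_comm]
          refine Finset.sum_congr rfl fun v _ => ?_
          simp only [phiAux]
          rw [← Finset.sum_mul]

lemma colW (W2 : X → Y2 → ℝ) (p : U → V → X → ℝ) (c : U → ℝ) (y2 : Y2) :
    ∑ v, ∑ u, ∑ x, (p u v x * c u) * W2 x y2
      = ∑ x, (∑ u, (∑ v, p u v x) * c u) * W2 x y2 := by
  rw [Finset.sum_comm]
  have h1 : ∀ (u : U) (v : V) (x : X), (p u v x * c u) * W2 x y2
      = p u v x * (c u * W2 x y2) := fun u v x => by ring
  simp_rw [h1]
  rw [rearr3 p (fun u x => c u * W2 x y2)]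
  refine Finset.sum_congr rfl fun x _ => ?_
  rw [Finset.sum_mul]
  exact Finset.sum_congr rfl fun u _ => by ring

lemma term2Aux (W2 : X → Y2 → ℝ) (hW2nn : ∀ x y, 0 ≤ W2 x y) (hW2sum : ∀ x, ∑ y, W2 x y = 1)
    (p : U → V → X → ℝ) (hpnn : ∀ u v x, 0 ≤ p u v x)
    (L : U → ℝ) (hL : ∀ x, ∑ u, (∑ v, p u v x) * L u = 0)
    (ε : ℝ) (hε : ∀ u, 0 ≤ 1 + ε * L u) :
    mutInf (fun v y2 => ∑ u, ∑ x, (p u v x * (1 + ε * L u)) * W2 x y2) =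
      (∑ v, ∑ y2, phiAux (∑ u, ∑ x, (p u v x * (1 + ε * L u)) * W2 x y2))
      - (∑ v, phiAux (∑ u, (1 + ε * L u) * (∑ x, p u v x)))
      - ∑ y2, phiAux (∑ v, ∑ u, ∑ x, p u v x * W2 x y2) := by
  unfold mutInf
  beta_reduce
  have hCnn : ∀ (v : V) (y2 : Y2), 0 ≤ ∑ u, ∑ x, (p u v x * (1 + ε * L u)) * W2 x y2 :=
    fun v y2 => Finset.sum_nonneg fun u _ => Finset.sum_nonneg fun x _ =>
      mul_nonneg (mul_nonneg (hpnn u v x) (hε u)) (hW2nn x y2)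
  have hrow : ∀ v : V, (∑ y2, ∑ u, ∑ x, (p u v x * (1 + ε * L u)) * W2 x y2)
      = ∑ u, (1 + ε * L u) * (∑ x, p u v x) := by
    intro v
    rw [sum_over_out (fun u x => p u v x * (1 + ε * L u)) W2 hW2sum]
    refine Finset.sum_congr rfl fun u _ => ?_
    rw [Finset.mul_sum]
    exact Finset.sum_congr rfl fun x _ => by ring
  have hcol : ∀ y2 : Y2, (∑ v, ∑ u, ∑ x, (p u v x * (1 + ε * L u)) * W2 x y2)
      = ∑ v, ∑ u, ∑ x, p u v x * W2 x y2 := by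
    intro y2
    rw [colW W2 p (fun u => 1 + ε * L u) y2]
    have h2 : ∀ x : X, (∑ u, (∑ v, p u v x) * (1 + ε * L u)) = ∑ u, ∑ v, p u v x := by
      intro x
      have h3 : ∀ u : U, (∑ v, p u v x) * (1 + ε * L u)
          = (∑ v, p u v x) + ((∑ v, p u v x) * L u) * ε := fun u => by ring
      simp_rw [h3]
      rw [Finset.sum_add_distrib, ← Finset.sum_mul, hL, zero_mul, add_zero]
    simp_rw [h2]
    have h4 : ∀ (u : U) (v : V) (x : X), p u v x * W2 x y2 = p u v x * ((fun u x => W2 x y2) u x) :=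
      fun u v x => rfl
    rw [Finset.sum_comm (γ := V) (α := U)]
    simp_rw [h4]
    rw [rearr3 p (fun u x => W2 x y2)]
    exact Finset.sum_congr rfl fun x _ => Finset.sum_mul _ _ _
  have key : ∀ (v : V) (y2 : Y2),
      (∑ u, ∑ x, (p u v x * (1 + ε * L u)) * W2 x y2) *
        Real.logb 2 ((∑ u, ∑ x, (p u v x * (1 + ε * L u)) * W2 x y2) /
          ((∑ y2', ∑ u, ∑ x, (p u v x * (1 + ε * L u)) * W2 x y2') *
            (∑ v', ∑ u, ∑ x, (p u v' x * (1 + ε * L u)) * W2 x y2)))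
      = phiAux (∑ u, ∑ x, (p u v x * (1 + ε * L u)) * W2 x y2)
        - (∑ u, ∑ x, (p u v x * (1 + ε * L u)) * W2 x y2) *
            Real.logb 2 (∑ u, (1 + ε * L u) * (∑ x, p u v x))
        - (∑ u, ∑ x, (p u v x * (1 + ε * L u)) * W2 x y2) *
            Real.logb 2 (∑ v', ∑ u, ∑ x, p u v' x * W2 x y2) := by
    intro v y2
    rw [hrow, hcol]
    rcases (hCnn v y2).eq_or_lt with h | h
    · rw [← h]; simp [phiAux]
    · have hCne := ne_of_gt h
      have hs : 0 < ∑ u, (1 + ε * L u) * (∑ x, p u v x) := by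
        rw [← hrow v]
        exact lt_of_lt_of_le h (Finset.single_le_sum (fun y _ => hCnn v y) (Finset.mem_univ y2))
      have hq : 0 < ∑ v', ∑ u, ∑ x, p u v' x * W2 x y2 := by
        rw [← hcol y2]
        exact lt_of_lt_of_le h (Finset.single_le_sum (fun v' _ => hCnn v' y2) (Finset.mem_univ v))
      rw [show (∑ u, ∑ x, (p u v x * (1 + ε * L u)) * W2 x y2) /
            ((∑ u, (1 + ε * L u) * (∑ x, p u v x)) * ∑ v', ∑ u, ∑ x, p u v' x * W2 x y2)
          = (∑ u, ∑ x, (p u v x * (1 + ε * L u)) * W2 x y2) /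
            (∑ u, (1 + ε * L u) * (∑ x, p u v x)) / (∑ v', ∑ u, ∑ x, p u v' x * W2 x y2)
          from (div_div _ _ _).symm,
        Real.logb_div (div_ne_zero hCne (ne_of_gt hs)) (ne_of_gt hq),
        Real.logb_div hCne (ne_of_gt hs)]
      simp only [phiAux]; ring
  calc ∑ v, ∑ y2, (∑ u, ∑ x, (p u v x * (1 + ε * L u)) * W2 x y2) *
        Real.logb 2 ((∑ u, ∑ x, (p u v x * (1 + ε * L u)) * W2 x y2) /
          ((∑ y2', ∑ u, ∑ x, (p u v x * (1 + ε * L u)) * W2 x y2') *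
            (∑ v', ∑ u, ∑ x, (p u v' x * (1 + ε * L u)) * W2 x y2)))
      = ∑ v, ∑ y2, (phiAux (∑ u, ∑ x, (p u v x * (1 + ε * L u)) * W2 x y2)
        - (∑ u, ∑ x, (p u v x * (1 + ε * L u)) * W2 x y2) *
            Real.logb 2 (∑ u, (1 + ε * L u) * (∑ x, p u v x))
        - (∑ u, ∑ x, (p u v x * (1 + ε * L u)) * W2 x y2) *
            Real.logb 2 (∑ v', ∑ u, ∑ x, p u v' x * W2 x y2)) :=
        Finset.sum_congr rfl fun v _ => Finset.sum_congr rfl fun y2 _ => key v y2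
    _ = (∑ v, ∑ y2, phiAux (∑ u, ∑ x, (p u v x * (1 + ε * L u)) * W2 x y2))
      - (∑ v, phiAux (∑ u, (1 + ε * L u) * (∑ x, p u v x)))
      - ∑ y2, phiAux (∑ v, ∑ u, ∑ x, p u v x * W2 x y2) := by
        simp_rw [Finset.sum_sub_distrib]
        congr 1
        · congr 1
          refine Finset.sum_congr rfl fun v _ => ?_
          rw [← Finset.sum_mul, hrow]
          rfl
        · rw [Finset.sum_comm]
          refine Finset.sum_congr rfl fun y2 _ => ?_
          rw [← Finset.sum_mul, hcol]
          rfl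

lemma keyIdentity (W1 : X → Y1 → ℝ) (W2 : X → Y2 → ℝ)
    (hW1sum : ∀ x, ∑ y, W1 x y = 1)
    (hW2nn : ∀ x y, 0 ≤ W2 x y) (hW2sum : ∀ x, ∑ y, W2 x y = 1)
    (p : U → V → X → ℝ) (hpnn : ∀ u v x, 0 ≤ p u v x)
    (L : U → ℝ) (hL : ∀ x, ∑ u, (∑ v, p u v x) * L u = 0)
    (ε : ℝ) (hε : ∀ u, 0 ≤ 1 + ε * L u) :
    FMarton W1 W2 (fun u v x => p u v x * (1 + ε * L u)) =
      ((∑ u, (1 + ε * L u) * ∑ y1, (∑ v, ∑ x, p u v x * W1 x y1) *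
        Real.logb 2 ((∑ v, ∑ x, p u v x * W1 x y1) /
          ((∑ v, ∑ x, p u v x) * (∑ u', ∑ v, ∑ x, p u' v x * W1 x y1))))
      - (∑ u, (1 + ε * L u) * ∑ v, (∑ x, p u v x) *
        Real.logb 2 ((∑ x, p u v x) / (∑ v', ∑ x, p u v' x))))
      - (∑ y2, phiAux (∑ v, ∑ u, ∑ x, p u v x * W2 x y2))
      + ∑ v, ∑ y2, phiAux (∑ u, ∑ x, (p u v x * (1 + ε * L u)) * W2 x y2) := by
  unfold FMarton
  rw [show (fun u y1 => ∑ v, ∑ x, (fun u v x => p u v x * (1 + ε * L u)) u v x * W1 x y1)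
      = fun u y1 => ∑ v, ∑ x, (p u v x * (1 + ε * L u)) * W1 x y1 from rfl,
    show (fun v y2 => ∑ u, ∑ x, (fun u v x => p u v x * (1 + ε * L u)) u v x * W2 x y2)
      = fun v y2 => ∑ u, ∑ x, (p u v x * (1 + ε * L u)) * W2 x y2 from rfl,
    show (fun u v => ∑ x, (fun u v x => p u v x * (1 + ε * L u)) u v x)
      = fun u v => ∑ x, p u v x * (1 + ε * L u) from rfl,
    term1Aux W1 hW1sum p L hL ε hε, term2Aux W2 hW2nn hW2sum p hpnn L hL ε hε,
    term3Aux p hpnn L ε hε]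
  ring

end Terms

theorem stmt_18 {U V X Y1 Y2 : Type*}
    [Fintype U] [Fintype V] [Fintype X] [Fintype Y1] [Fintype Y2]
    (W1 : X → Y1 → ℝ) (W2 : X → Y2 → ℝ)
    (hW1nn : ∀ x y, 0 ≤ W1 x y) (hW1sum : ∀ x, ∑ y, W1 x y = 1)
    (hW2nn : ∀ x y, 0 ≤ W2 x y) (hW2sum : ∀ x, ∑ y, W2 x y = 1)
    (p : U → V → X → ℝ)
    (hpnn : ∀ u v x, 0 ≤ p u v x)
    (hpsum : ∑ u, ∑ v, ∑ x, p u v x = 1)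
    (f : U → V → X) (hdet : ∀ u v x, x ≠ f u v → p u v x = 0)
    (hmax : ∀ q : U → V → X → ℝ, (∀ u v x, 0 ≤ q u v x) →
      (∑ u, ∑ v, ∑ x, q u v x) = 1 → FMarton W1 W2 q ≤ FMarton W1 W2 p)
    (hcard : Fintype.card X < Fintype.card U) :
    ∃ q : U → V → X → ℝ,
      (∀ u v x, 0 ≤ q u v x) ∧
      (∑ u, ∑ v, ∑ x, q u v x) = 1 ∧
      (∃ f' : U → V → X, ∀ u v x, x ≠ f' u v → q u v x = 0) ∧
      (∀ x, (∑ u, ∑ v, q u v x) = ∑ u, ∑ v, p u v x) ∧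
      (∃ u0 : U, ∀ v x, q u0 v x = 0) ∧
      FMarton W1 W2 q = FMarton W1 W2 p := by
  -- Step 1: find a nonzero L with ∑ u, (∑ v, p u v x) * L u = 0 for every x
  obtain ⟨L, hL, hLne⟩ : ∃ L : U → ℝ, (∀ x, ∑ u, (∑ v, p u v x) * L u = 0) ∧ L ≠ 0 := by
    set A : Matrix X U ℝ := fun x u => ∑ v, p u v x with hA
    have hninj : ¬ Function.Injective A.mulVecLin := by
      intro h
      have h2 := LinearMap.finrank_le_finrank_of_injective h
      rw [Module.finrank_fintype_fun_eq_card, Module.finrank_fintype_fun_eq_card] at h2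
      omega
    obtain ⟨L1, L2, hTeq, hLne⟩ := Function.not_injective_iff.mp hninj
    refine ⟨L1 - L2, fun x => ?_, sub_ne_zero.mpr hLne⟩
    have h0 : A.mulVecLin (L1 - L2) = 0 := by rw [map_sub, hTeq, sub_self]
    have h1 := congrFun h0 x
    simpa [Matrix.mulVecLin_apply, Matrix.mulVec, dotProduct, hA] using (show (Matrix.mulVec A (L1 - L2)) x = 0 from h1)
  -- Step 2: choose u0 maximizing |L| and set ε := -(L u0)⁻¹
  have hUne : Nonempty U := Fintype.card_pos_iff.mp (lt_of_le_of_lt (Nat.zero_le _) hcard)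
  obtain ⟨u0, -, hmaxL⟩ := Finset.exists_max_image (Finset.univ : Finset U)
    (fun u => |L u|) (Finset.univ_nonempty)
  obtain ⟨u1, hu1⟩ := Function.ne_iff.mp hLne
  have hc : L u0 ≠ 0 := by
    intro h
    have h2 := hmaxL u1 (Finset.mem_univ u1)
    rw [h] at h2
    simp only [abs_zero] at h2
    exact hu1 (abs_eq_zero.mp (le_antisymm h2 (abs_nonneg _)))
  set ε : ℝ := -(L u0)⁻¹ with hεdef
  have habs : ∀ u : U, |ε * L u| ≤ 1 := by
    intro u
    rw [abs_mul, hεdef, abs_neg, abs_inv, mul_comm, ← div_eq_mul_inv]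
    exact div_le_one_of_le₀ (hmaxL u (Finset.mem_univ u)) (abs_nonneg _)
  have hval : ∀ u : U, 0 ≤ 1 + ε * L u := by
    intro u
    have := neg_abs_le (ε * L u)
    linarith [habs u]
  have hval' : ∀ u : U, 0 ≤ 1 + (-ε) * L u := by
    intro u
    have h1 : |(-ε) * L u| ≤ 1 := by rw [neg_mul, abs_neg]; exact habs u
    have := neg_abs_le ((-ε) * L u)
    linarith
  have hval0 : ∀ u : U, 0 ≤ 1 + (0:ℝ) * L u := fun u => by norm_num
  -- Step 3: generic facts about the perturbed distributions
  have hX : ∀ (s : ℝ) (x : X), ∑ u, (∑ v, p u v x) * (1 + s * L u) = ∑ u, ∑ v, p u v x := by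
    intro s x
    have h3 : ∀ u : U, (∑ v, p u v x) * (1 + s * L u)
        = (∑ v, p u v x) + ((∑ v, p u v x) * L u) * s := fun u => by ring
    simp_rw [h3]
    rw [Finset.sum_add_distrib, ← Finset.sum_mul, hL, zero_mul, add_zero]
  have hqnn : ∀ (s : ℝ), (∀ u, 0 ≤ 1 + s * L u) →
      ∀ u v x, 0 ≤ p u v x * (1 + s * L u) :=
    fun s hs u v x => mul_nonneg (hpnn u v x) (hs u)
  have hswap : ∑ x, ∑ u, ∑ v, p u v x = 1 := by
    have h := rearr3 p (fun _ _ => (1:ℝ))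
    simp only [mul_one] at h
    rw [← h]; exact hpsum
  have hqsum : ∀ s : ℝ, ∑ u, ∑ v, ∑ x, p u v x * (1 + s * L u) = 1 := by
    intro s
    have h := rearr3 p (fun u _ => 1 + s * L u)
    rw [h]
    calc ∑ x, ∑ u, (∑ v, p u v x) * (1 + s * L u)
        = ∑ x, ∑ u, ∑ v, p u v x := Finset.sum_congr rfl fun x _ => hX s x
      _ = 1 := hswap
  have hqmarg : ∀ (s : ℝ) (x : X), (∑ u, ∑ v, p u v x * (1 + s * L u))
      = ∑ u, ∑ v, p u v x := by
    intro s x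
    calc ∑ u, ∑ v, p u v x * (1 + s * L u)
        = ∑ u, (∑ v, p u v x) * (1 + s * L u) := by
          refine Finset.sum_congr rfl fun u _ => ?_
          rw [Finset.sum_mul]
      _ = ∑ u, ∑ v, p u v x := hX s x
  -- Step 4: F values via key identity at ε, -ε, 0
  have hkey := fun (s : ℝ) (hs : ∀ u, 0 ≤ 1 + s * L u) =>
    keyIdentity W1 W2 hW1sum hW2nn hW2sum p hpnn L hL s hs
  have hp0 : (fun u v x => p u v x * (1 + (0:ℝ) * L u)) = p := by
    funext u v x; ring
  have hFp : FMarton W1 W2 p =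
      ((∑ u, (1 + (0:ℝ) * L u) * ∑ y1, (∑ v, ∑ x, p u v x * W1 x y1) *
        Real.logb 2 ((∑ v, ∑ x, p u v x * W1 x y1) /
          ((∑ v, ∑ x, p u v x) * (∑ u', ∑ v, ∑ x, p u' v x * W1 x y1))))
      - (∑ u, (1 + (0:ℝ) * L u) * ∑ v, (∑ x, p u v x) *
        Real.logb 2 ((∑ x, p u v x) / (∑ v', ∑ x, p u v' x))))
      - (∑ y2, phiAux (∑ v, ∑ u, ∑ x, p u v x * W2 x y2))
      + ∑ v, ∑ y2, phiAux (∑ u, ∑ x, (p u v x * (1 + (0:ℝ) * L u)) * W2 x y2) := by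
    conv_lhs => rw [← hp0]
    exact hkey 0 hval0
  have hFe := hkey ε hval
  have hFe' := hkey (-ε) hval'
  -- Step 5: maximality
  have hle1 : FMarton W1 W2 (fun u v x => p u v x * (1 + ε * L u)) ≤ FMarton W1 W2 p :=
    hmax _ (hqnn ε hval) (hqsum ε)
  have hle2 : FMarton W1 W2 (fun u v x => p u v x * (1 + (-ε) * L u)) ≤ FMarton W1 W2 p :=
    hmax _ (hqnn (-ε) hval') (hqsum (-ε))
  -- Step 6: midpoint convexity of the phi part
  have hCnn : ∀ (s : ℝ), (∀ u, 0 ≤ 1 + s * L u) → ∀ (v : V) (y2 : Y2),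
      0 ≤ ∑ u, ∑ x, (p u v x * (1 + s * L u)) * W2 x y2 :=
    fun s hs v y2 => Finset.sum_nonneg fun u _ => Finset.sum_nonneg fun x _ =>
      mul_nonneg (mul_nonneg (hpnn u v x) (hs u)) (hW2nn x y2)
  have hmidC : ∀ (v : V) (y2 : Y2),
      (∑ u, ∑ x, (p u v x * (1 + (0:ℝ) * L u)) * W2 x y2)
      = ((∑ u, ∑ x, (p u v x * (1 + ε * L u)) * W2 x y2)
        + (∑ u, ∑ x, (p u v x * (1 + (-ε) * L u)) * W2 x y2)) / 2 := by
    intro v y2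
    rw [← Finset.sum_add_distrib]
    rw [Finset.sum_div]
    refine Finset.sum_congr rfl fun u _ => ?_
    rw [← Finset.sum_add_distrib, Finset.sum_div]
    refine Finset.sum_congr rfl fun x _ => ?_
    ring
  have hmidPhi : ∀ (v : V) (y2 : Y2),
      phiAux (∑ u, ∑ x, (p u v x * (1 + (0:ℝ) * L u)) * W2 x y2)
      ≤ (phiAux (∑ u, ∑ x, (p u v x * (1 + ε * L u)) * W2 x y2)
        + phiAux (∑ u, ∑ x, (p u v x * (1 + (-ε) * L u)) * W2 x y2)) / 2 := by
    intro v y2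
    rw [hmidC v y2]
    exact phiAux_mid (hCnn ε hval v y2) (hCnn (-ε) hval' v y2)
  have hmidSum :
      2 * (∑ v, ∑ y2, phiAux (∑ u, ∑ x, (p u v x * (1 + (0:ℝ) * L u)) * W2 x y2))
      ≤ (∑ v, ∑ y2, phiAux (∑ u, ∑ x, (p u v x * (1 + ε * L u)) * W2 x y2))
        + ∑ v, ∑ y2, phiAux (∑ u, ∑ x, (p u v x * (1 + (-ε) * L u)) * W2 x y2) := by
    have hsum_le := Finset.sum_le_sum (s := (Finset.univ : Finset V))
      (fun v _ => Finset.sum_le_sum (s := (Finset.univ : Finset Y2))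
        fun y2 _ => hmidPhi v y2)
    have heq : (∑ v, ∑ y2, (phiAux (∑ u, ∑ x, (p u v x * (1 + ε * L u)) * W2 x y2)
        + phiAux (∑ u, ∑ x, (p u v x * (1 + (-ε) * L u)) * W2 x y2)) / 2)
        = ((∑ v, ∑ y2, phiAux (∑ u, ∑ x, (p u v x * (1 + ε * L u)) * W2 x y2))
        + ∑ v, ∑ y2, phiAux (∑ u, ∑ x, (p u v x * (1 + (-ε) * L u)) * W2 x y2)) / 2 := by
      simp_rw [← Finset.sum_div, Finset.sum_add_distrib]
    rw [heq] at hsum_le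
    linarith
  -- Step 7: midpoint identity for the affine part
  have haff : ∀ c : U → ℝ, (∑ u, (1 + ε * L u) * c u) + (∑ u, (1 + (-ε) * L u) * c u)
      = 2 * ∑ u, (1 + (0:ℝ) * L u) * c u := by
    intro c
    rw [← Finset.sum_add_distrib, Finset.mul_sum]
    exact Finset.sum_congr rfl fun u _ => by ring
  have haff1 := haff (fun u => ∑ y1, (∑ v, ∑ x, p u v x * W1 x y1) *
        Real.logb 2 ((∑ v, ∑ x, p u v x * W1 x y1) /
          ((∑ v, ∑ x, p u v x) * (∑ u', ∑ v, ∑ x, p u' v x * W1 x y1))))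
  have haff3 := haff (fun u => ∑ v, (∑ x, p u v x) *
        Real.logb 2 ((∑ x, p u v x) / (∑ v', ∑ x, p u v' x)))
  beta_reduce at haff1 haff3
  -- Step 8: conclude the F equality
  have hFE : FMarton W1 W2 (fun u v x => p u v x * (1 + ε * L u)) = FMarton W1 W2 p := by
    linarith [hFe, hFe', hFp, hle1, hle2, hmidSum, haff1, haff3]
  -- Step 9: assemble
  have h0 : 1 + ε * L u0 = 0 := by
    rw [hεdef, neg_mul, inv_mul_cancel₀ hc]; ring
  exact ⟨fun u v x => p u v x * (1 + ε * L u), hqnn ε hval, hqsum ε,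
    ⟨f, fun u v x hx => by show p u v x * (1 + ε * L u) = 0; rw [hdet u v x hx, zero_mul]⟩,
    hqmarg ε, ⟨u0, fun v x => by show p u0 v x * (1 + ε * L u0) = 0; rw [h0, mul_zero]⟩, hFE⟩
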